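/- arXiv:2204.04784 — 4 statements merged into one kernel-verified Lean document; each statement's English description precedes it below -/
import Mathlib

section
/- Let K be a local field with ring of integers R, let A = K^r be the split semisimple commutative algebra with maximal order Λ_0 = R^r, and let Λ be an R-order in A. If M and M' are full Λ-lattices with Λ ⊆ M ⊆ Λ_0 and Λ ⊆ M' ⊆ Λ_0, M is itself an R-order (i.e., a subring), and φ: M → M' is a Λ-module isomorphism, then M = M'. -/
/-- If `M`, `M'` are full `Λ`-lattices between `Λ` and the maximal order
`Λ₀ = R^r`, `M` is a subring, and `M' = M·u` for a unit `u` of `A` (i.e. `M`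
and `M'` are isomorphic as `Λ`-modules), then `M = M'`. -/
theorem stmt_6 (R : Type*) [CommRing R] [IsDomain R] [IsDiscreteValuationRing R]
    [Finite (R ⧸ IsLocalRing.maximalIdeal R)] (r : ℕ)
    (Λ : Subalgebra R (Fin r → FractionRing R))
    (hΛfg : (Subalgebra.toSubmodule Λ).FG)
    (hΛfull : Submodule.span (FractionRing R) (Λ : Set (Fin r → FractionRing R)) = ⊤)
    (M M' : Submodule R (Fin r → FractionRing R)) (hMfg : M.FG) (hM'fg : M'.FG)
    (hMmod : ∀ a ∈ Λ, ∀ x ∈ M, a * x ∈ M) (hM'mod : ∀ a ∈ Λ, ∀ x ∈ M', a * x ∈ M')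
    (hΛM : (Λ : Set (Fin r → FractionRing R)) ⊆ M)
    (hΛM' : (Λ : Set (Fin r → FractionRing R)) ⊆ M')
    (hMΛ0 : ∀ x ∈ M, ∀ i, IsLocalization.IsInteger R (x i))
    (hM'Λ0 : ∀ x ∈ M', ∀ i, IsLocalization.IsInteger R (x i))
    (hMring : ∀ x ∈ M, ∀ y ∈ M, x * y ∈ M)
    (u : (Fin r → FractionRing R)ˣ)
    (hiso : (fun x => x * (u : Fin r → FractionRing R)) '' M = M') :
    M = M' := by
  set K := FractionRing R
  set A := Fin r → K
  have h1M : (1 : A) ∈ M := hΛM Λ.one_mem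
  have h1M' : (1 : A) ∈ M' := hΛM' Λ.one_mem
  have huM' : (u : A) ∈ M' := by
    rw [← SetLike.mem_coe, ← hiso]
    exact ⟨1, h1M, one_mul _⟩
  have hvM : ((u⁻¹ : (Fin r → K)ˣ) : A) ∈ M := by
    rw [← SetLike.mem_coe, ← hiso] at h1M'
    obtain ⟨m, hm, hmu⟩ := h1M'
    have hmu' : m * (u : A) = 1 := hmu
    have hme : m = ((u⁻¹ : (Fin r → K)ˣ) : A) := by
      have : m * ((u : A) * ((u⁻¹ : (Fin r → K)ˣ) : A)) =
          ((u⁻¹ : (Fin r → K)ˣ) : A) := by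
        rw [← mul_assoc, hmu', one_mul]
      rw [← this, Units.mul_inv, mul_one]
    rwa [← hme]
  set v : A := ((u⁻¹ : (Fin r → K)ˣ) : A) with hv
  -- components of u and u⁻¹
  choose a ha using fun i => hM'Λ0 _ huM' i
  choose b hb using fun i => hMΛ0 _ hvM i
  have hab : ∀ i, a i * b i = 1 := by
    intro i
    apply IsFractionRing.injective R K
    have h := congrFun (Units.mul_inv u) i
    simp only [Pi.mul_apply, Pi.one_apply] at h
    rw [map_mul, ha, hb, map_one]
    exact h
  -- u⁻¹ satisfies a monic polynomial over R with unit constant coefficient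
  set g : Polynomial R := ∏ i : Fin r, (Polynomial.X - Polynomial.C (b i)) with hg
  have hgv : Polynomial.aeval v g = 0 := by
    rw [hg, map_prod]
    funext j
    rw [Finset.prod_apply, Pi.zero_apply]
    apply Finset.prod_eq_zero (Finset.mem_univ j)
    simp only [map_sub, Polynomial.aeval_X, Polynomial.aeval_C]
    rw [Pi.sub_apply, Pi.algebraMap_apply, hb j, sub_self]
  have key : v * Polynomial.aeval v g.divX + algebraMap R A (g.coeff 0) = 0 := by
    rw [← hgv]
    conv_rhs => rw [← Polynomial.X_mul_divX_add g]
    rw [map_add, map_mul, Polynomial.aeval_X, Polynomial.aeval_C]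
  -- the constant coefficient is a unit
  have hc0 : g.coeff 0 = ∏ i : Fin r, (-(b i)) := by
    rw [Polynomial.coeff_zero_eq_eval_zero, hg, Polynomial.eval_prod]
    apply Finset.prod_congr rfl
    intro i _
    simp
  set d : R := ∏ i : Fin r, (-(a i)) with hd
  have hdc : g.coeff 0 * d = 1 := by
    rw [hc0, hd, ← Finset.prod_mul_distrib]
    apply Finset.prod_eq_one
    intro i _
    rw [neg_mul_neg, mul_comm]
    exact hab i
  -- every R-polynomial evaluated at v lies in M
  have haux : ∀ p : Polynomial R, Polynomial.aeval v p ∈ M := by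
    intro p
    induction p using Polynomial.induction_on' with
    | add p q hp hq => rw [map_add]; exact M.add_mem hp hq
    | monomial n c =>
      rw [Polynomial.aeval_monomial, ← Algebra.smul_def]
      refine M.smul_mem _ ?_
      induction n with
      | zero => simpa using h1M
      | succ k ih => rw [pow_succ]; exact hMring _ ih _ hvM
  -- hence u ∈ M
  have huM : (u : A) ∈ M := by
    have hw : Polynomial.aeval v g.divX ∈ M := haux _
    have h1 : Polynomial.aeval v g.divX = -((u : A) * algebraMap R A (g.coeff 0)) := by
      have := congrArg (fun x => (u : A) * x) key
      simp only [mul_add, mul_zero, ← mul_assoc] at this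
      rw [hv, Units.mul_inv, one_mul] at this
      linear_combination this
    have h2 : (u : A) = -(algebraMap R A d * Polynomial.aeval v g.divX) := by
      rw [h1]
      rw [mul_neg, neg_neg, ← mul_assoc, mul_comm (algebraMap R A d), mul_assoc,
        ← map_mul, mul_comm d, hdc, map_one, mul_one]
    rw [h2, ← neg_mul, ← map_neg, ← Algebra.smul_def]
    exact M.smul_mem _ hw
  -- conclude
  apply le_antisymm
  · intro x hx
    rw [← SetLike.mem_coe, ← hiso]
    refine ⟨x * v, hMring _ hx _ hvM, ?_⟩
    simp only [hv, mul_assoc, Units.inv_mul, mul_one]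
  · intro x hx
    rw [← SetLike.mem_coe, ← hiso] at hx
    obtain ⟨m, hm, rfl⟩ := hx
    exact hMring _ hm _ huM
end

section
/- Let p be a prime and m ≥ 1. Define for 0 ≤ i ≤ m the quantity Z_i(s) = p^{-ms-is+i-1}(p-1)(1-p^{-s})^{-2} + p^{-ms+is} ∑_{j=1}^{i} p^{(i-j) - 2(i-j)s} for i ≥ 1, and Z_0(s) = p^{-ms}(1-p^{-s})^{-2}. Then ∑_{i=0}^{m} Z_i(s) = [ (1-p^{-s}) ∑_{r=0}^{m-1} p^{r(1-2s)} + p^{m(1-2s)} ] (1-p^{-s})^{-2}, for all complex s with p^{-s} ≠ 1. -/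
open Finset

private lemma key_alg (q t : ℂ) (hq : q ≠ 0) (ht : t ≠ 0) (ht1 : 1 - t ≠ 0) (m : ℕ) :
    t ^ m * ((1 - t)⁻¹) ^ 2
      + ∑ i ∈ Icc 1 m,
          ((q * t) ^ i * (q - 1) * q⁻¹ * t ^ m * ((1 - t)⁻¹) ^ 2
            + t ^ m * (t⁻¹) ^ i * ∑ k ∈ range i, (q * t ^ 2) ^ k)
    = ((1 - t) * ∑ r ∈ range m, (q * t ^ 2) ^ r + (q * t ^ 2) ^ m) * ((1 - t)⁻¹) ^ 2 := by
  induction m with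
  | zero => simp
  | succ m ih =>
    rw [Finset.sum_Icc_succ_top (Nat.succ_le_succ (Nat.zero_le m)), Finset.sum_range_succ]
    have hstep : ∑ i ∈ Icc 1 m,
        ((q * t) ^ i * (q - 1) * q⁻¹ * t ^ (m + 1) * ((1 - t)⁻¹) ^ 2
          + t ^ (m + 1) * (t⁻¹) ^ i * ∑ k ∈ range i, (q * t ^ 2) ^ k)
        = t * ∑ i ∈ Icc 1 m,
        ((q * t) ^ i * (q - 1) * q⁻¹ * t ^ m * ((1 - t)⁻¹) ^ 2
          + t ^ m * (t⁻¹) ^ i * ∑ k ∈ range i, (q * t ^ 2) ^ k) := by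
      rw [Finset.mul_sum]
      exact Finset.sum_congr rfl fun i _ => by ring
    rw [hstep]
    have hS : ∑ i ∈ Icc 1 m,
        ((q * t) ^ i * (q - 1) * q⁻¹ * t ^ m * ((1 - t)⁻¹) ^ 2
          + t ^ m * (t⁻¹) ^ i * ∑ k ∈ range i, (q * t ^ 2) ^ k)
        = ((1 - t) * ∑ r ∈ range m, (q * t ^ 2) ^ r + (q * t ^ 2) ^ m) * ((1 - t)⁻¹) ^ 2
          - t ^ m * ((1 - t)⁻¹) ^ 2 := by
      rw [← ih]; ring
    rw [hS]
    have h4 : t ^ (m + 1) * t⁻¹ ^ (m + 1) * (∑ x ∈ range m, (q * t ^ 2) ^ x + (q * t ^ 2) ^ m)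
        = ∑ x ∈ range m, (q * t ^ 2) ^ x + (q * t ^ 2) ^ m := by
      rw [← mul_pow, mul_inv_cancel₀ ht, one_pow, one_mul]
    rw [h4]
    field_simp [hq, ht1, sub_ne_zero]
    ring

theorem stmt_11 (p : ℕ) (hp : p.Prime) (m : ℕ) (hm : 1 ≤ m) (s : ℂ)
    (hs : (p : ℂ) ^ (-s) ≠ 1) :
    (p : ℂ) ^ (-(m : ℂ) * s) * ((1 - (p : ℂ) ^ (-s))⁻¹) ^ 2
      + ∑ i ∈ Finset.Icc 1 m,
          ((p : ℂ) ^ (-(m : ℂ) * s - (i : ℂ) * s + (i : ℂ) - 1) * ((p : ℂ) - 1)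
              * ((1 - (p : ℂ) ^ (-s))⁻¹) ^ 2
            + (p : ℂ) ^ (-(m : ℂ) * s + (i : ℂ) * s)
              * ∑ j ∈ Finset.Icc 1 i,
                  (p : ℂ) ^ (((i : ℂ) - (j : ℂ)) - 2 * ((i : ℂ) - (j : ℂ)) * s))
    = ((1 - (p : ℂ) ^ (-s)) * ∑ r ∈ Finset.range m, (p : ℂ) ^ ((r : ℂ) * (1 - 2 * s))
        + (p : ℂ) ^ ((m : ℂ) * (1 - 2 * s))) * ((1 - (p : ℂ) ^ (-s))⁻¹) ^ 2 := by
  set q : ℂ := (p : ℂ) with hqdef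
  have hq : q ≠ 0 := by
    simp [hqdef, hp.ne_zero]
  set t : ℂ := q ^ (-s) with htdef
  have ht : t ≠ 0 := by
    intro h
    exact hq ((Complex.cpow_eq_zero_iff q (-s)).1 h).1
  have ht1 : (1 : ℂ) - t ≠ 0 := sub_ne_zero.2 (Ne.symm hs)
  have hone : q ^ ((1 : ℂ) - 2 * s) = q * t ^ 2 := by
    rw [show (1 : ℂ) - 2 * s = 1 + ((2 : ℕ) : ℂ) * (-s) by push_cast; ring,
      Complex.cpow_add _ _ hq, Complex.cpow_one, Complex.cpow_nat_mul, htdef]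
  have ha : ∀ c : ℕ, q ^ ((c : ℂ) * (1 - 2 * s)) = (q * t ^ 2) ^ c := fun c => by
    rw [Complex.cpow_nat_mul, hone]
  have htm : q ^ (-(m : ℂ) * s) = t ^ m := by
    rw [show -(m : ℂ) * s = ((m : ℕ) : ℂ) * (-s) by push_cast; ring,
      Complex.cpow_nat_mul, htdef]
  have hts : q ^ s = t⁻¹ := by
    rw [htdef, Complex.cpow_neg, inv_inv]
  have houter : ∑ i ∈ Finset.Icc 1 m,
        (q ^ (-(m : ℂ) * s - (i : ℂ) * s + (i : ℂ) - 1) * (q - 1)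
            * ((1 - t)⁻¹) ^ 2
          + q ^ (-(m : ℂ) * s + (i : ℂ) * s)
            * ∑ j ∈ Finset.Icc 1 i,
                q ^ (((i : ℂ) - (j : ℂ)) - 2 * ((i : ℂ) - (j : ℂ)) * s))
      = ∑ i ∈ Icc 1 m,
          ((q * t) ^ i * (q - 1) * q⁻¹ * t ^ m * ((1 - t)⁻¹) ^ 2
            + t ^ m * (t⁻¹) ^ i * ∑ k ∈ range i, (q * t ^ 2) ^ k) := by
    refine Finset.sum_congr rfl fun i _ => ?_
    have h1 : q ^ (-(m : ℂ) * s - (i : ℂ) * s + (i : ℂ) - 1)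
        = t ^ m * t ^ i * q ^ i * q⁻¹ := by
      rw [show -(m : ℂ) * s - (i : ℂ) * s + (i : ℂ) - 1
          = ((m : ℕ) : ℂ) * (-s) + (((i : ℕ) : ℂ) * (-s) + (((i : ℕ) : ℂ) + (-1))) by
        push_cast; ring]
      rw [Complex.cpow_add _ _ hq, Complex.cpow_add _ _ hq, Complex.cpow_add _ _ hq,
        Complex.cpow_nat_mul, Complex.cpow_nat_mul, Complex.cpow_natCast,
        Complex.cpow_neg_one, htdef]
      ring
    have h2 : q ^ (-(m : ℂ) * s + (i : ℂ) * s) = t ^ m * (t⁻¹) ^ i := by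
      rw [show -(m : ℂ) * s + (i : ℂ) * s = ((m : ℕ) : ℂ) * (-s) + ((i : ℕ) : ℂ) * s by
        push_cast; ring]
      rw [Complex.cpow_add _ _ hq, Complex.cpow_nat_mul, Complex.cpow_nat_mul, hts, htdef]
    have h3 : ∑ j ∈ Finset.Icc 1 i,
          q ^ (((i : ℂ) - (j : ℂ)) - 2 * ((i : ℂ) - (j : ℂ)) * s)
        = ∑ k ∈ range i, (q * t ^ 2) ^ k := by
      have step1 : ∑ j ∈ Finset.Icc 1 i,
            q ^ (((i : ℂ) - (j : ℂ)) - 2 * ((i : ℂ) - (j : ℂ)) * s)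
          = ∑ j ∈ Finset.Icc 1 i, (q * t ^ 2) ^ (i - j) := by
        refine Finset.sum_congr rfl fun j hj => ?_
        have hji : j ≤ i := (Finset.mem_Icc.1 hj).2
        have hc : (i : ℂ) - (j : ℂ) = ((i - j : ℕ) : ℂ) := by
          rw [Nat.cast_sub hji]
        rw [show ((i : ℂ) - (j : ℂ)) - 2 * ((i : ℂ) - (j : ℂ)) * s
            = ((i - j : ℕ) : ℂ) * (1 - 2 * s) by rw [hc]; ring]
        exact ha (i - j)
      rw [step1]
      refine Finset.sum_nbij' (fun j => i - j) (fun k => i - k) ?_ ?_ ?_ ?_ ?_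
      · intro a ha'
        simp only [Finset.mem_Icc] at ha'
        simp only [Finset.mem_range]
        omega
      · intro a ha'
        simp only [Finset.mem_range] at ha'
        simp only [Finset.mem_Icc]
        omega
      · intro a ha'
        simp only [Finset.mem_Icc] at ha'
        show i - (i - a) = a
        omega
      · intro a ha'
        simp only [Finset.mem_range] at ha'
        show i - (i - a) = a
        omega
      · intro a _
        rfl
    rw [h1, h2, h3]
    ring
  rw [htm, houter]
  simp only [ha]
  exact key_alg q t hq ht ht1 m
end

section
/- Let n > 1 be odd and identify the adjacency order of the crown graph K_{n,n}−I with the subring Λ of Z^4 generated by b_0 = (1,1,1,1), b_1 = (n-1, -(n-1), -1, 1), b_2 = (n-1, n-1, -1, -1), b_3 = (1, -1, 1, -1). Then after tensoring with Z_2, Λ ⊗ Z_2 is isomorphic as a Z_2-algebra to the product of two copies of the order {(a,b) ∈ Z_2 × Z_2 : a ≡ b mod 2}. -/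
def crownFactor : Subalgebra ℤ_[2] (ℤ_[2] × ℤ_[2]) where
  carrier := {x | (2 : ℤ_[2]) ∣ x.1 - x.2}
  add_mem' := by
    intro a b ha hb
    simpa [add_sub_add_comm] using dvd_add ha hb
  mul_mem' := by
    intro a b ha hb
    have h : (a * b).1 - (a * b).2 = a.1 * (b.1 - b.2) + (a.1 - a.2) * b.2 := by
      simp [Prod.fst_mul, Prod.snd_mul]; ring
    rw [Set.mem_setOf_eq, h]
    exact dvd_add (Dvd.dvd.mul_left hb a.1) (Dvd.dvd.mul_right ha b.2)
  algebraMap_mem' := by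
    intro r
    simp [Algebra.algebraMap_eq_smul_one]

def crownS : Subalgebra ℤ_[2] (Fin 4 → ℤ_[2]) where
  carrier := {f | (2 : ℤ_[2]) ∣ f 0 - f 1 ∧ (2 : ℤ_[2]) ∣ f 2 - f 3}
  add_mem' := by
    rintro a b ⟨h1, h2⟩ ⟨h3, h4⟩
    exact ⟨by simpa [add_sub_add_comm] using dvd_add h1 h3,
      by simpa [add_sub_add_comm] using dvd_add h2 h4⟩
  mul_mem' := by
    rintro a b ⟨h1, h2⟩ ⟨h3, h4⟩
    constructor
    · have h : (a * b) 0 - (a * b) 1 = a 0 * (b 0 - b 1) + (a 0 - a 1) * b 1 := by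
        simp [Pi.mul_apply]; ring
      rw [h]
      exact dvd_add (h3.mul_left _) (h1.mul_right _)
    · have h : (a * b) 2 - (a * b) 3 = a 2 * (b 2 - b 3) + (a 2 - a 3) * b 3 := by
        simp [Pi.mul_apply]; ring
      rw [h]
      exact dvd_add (h4.mul_left _) (h2.mul_right _)
  algebraMap_mem' := by
    intro r
    refine ⟨⟨0, by simp⟩, ⟨0, by simp⟩⟩

lemma mem_crownS {f : Fin 4 → ℤ_[2]} :
    f ∈ crownS ↔ (2 : ℤ_[2]) ∣ f 0 - f 1 ∧ (2 : ℤ_[2]) ∣ f 2 - f 3 := Iff.rfl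

def crownEquiv : crownS ≃ₐ[ℤ_[2]] crownFactor × crownFactor where
  toFun f := (⟨(f.1 0, f.1 1), f.2.1⟩, ⟨(f.1 2, f.1 3), f.2.2⟩)
  invFun p := ⟨![p.1.1.1, p.1.1.2, p.2.1.1, p.2.1.2],
    ⟨p.1.2, p.2.2⟩⟩
  left_inv f := by
    apply Subtype.ext
    funext i
    fin_cases i <;> rfl
  right_inv p := rfl
  map_mul' f g := rfl
  map_add' f g := rfl
  commutes' r := rfl

theorem stmt_14 (n : ℤ) (hn : 1 < n) (hodd : Odd n) :
    let b0 : Fin 4 → ℤ_[2] := ![1, 1, 1, 1]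
    let b1 : Fin 4 → ℤ_[2] := ![(n : ℤ_[2]) - 1, -((n : ℤ_[2]) - 1), -1, 1]
    let b2 : Fin 4 → ℤ_[2] := ![(n : ℤ_[2]) - 1, (n : ℤ_[2]) - 1, -1, -1]
    let b3 : Fin 4 → ℤ_[2] := ![1, -1, 1, -1]
    Nonempty ((Algebra.adjoin ℤ_[2] ({b0, b1, b2, b3} : Set (Fin 4 → ℤ_[2])))
      ≃ₐ[ℤ_[2]] (crownFactor × crownFactor)) := by
  intro b0 b1 b2 b3
  -- n is a unit in ℤ_[2]
  have hndvd : ¬ ((2 : ℤ) ∣ n) := by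
    rw [Int.two_dvd_ne_zero]
    have := Int.odd_iff.mp hodd
    omega
  have hnorm : ‖(n : ℤ_[2])‖ = 1 := by
    rcases lt_or_eq_of_le (PadicInt.norm_le_one (n : ℤ_[2])) with h | h
    · exact absurd ((PadicInt.norm_int_lt_one_iff_dvd n).mp h) (by exact_mod_cast hndvd)
    · exact h
  have hu : IsUnit (n : ℤ_[2]) := PadicInt.isUnit_iff.mpr hnorm
  obtain ⟨v, hv⟩ := hu.exists_right_inv
  have key : Algebra.adjoin ℤ_[2] ({b0, b1, b2, b3} : Set (Fin 4 → ℤ_[2])) = crownS := by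
    apply le_antisymm
    · apply Algebra.adjoin_le
      rintro x hx
      simp only [Set.mem_insert_iff, Set.mem_singleton_iff] at hx
      rcases hx with rfl | rfl | rfl | rfl
      · exact ⟨⟨0, by simp [b0]⟩, ⟨0, by simp [b0]⟩⟩
      · exact ⟨⟨(n : ℤ_[2]) - 1, by simp [b1]; ring⟩, ⟨-1, by simp [b1]; ring⟩⟩
      · exact ⟨⟨0, by simp [b2]⟩, ⟨0, by simp [b2]⟩⟩
      · exact ⟨⟨1, by simp [b3]; ring⟩, ⟨1, by simp [b3]; ring⟩⟩
    · rintro f ⟨⟨a, ha⟩, ⟨b, hb⟩⟩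
      have hb0 : b0 ∈ Algebra.adjoin ℤ_[2] ({b0, b1, b2, b3} : Set (Fin 4 → ℤ_[2])) :=
        Algebra.subset_adjoin (by simp)
      have hb1 : b1 ∈ Algebra.adjoin ℤ_[2] ({b0, b1, b2, b3} : Set (Fin 4 → ℤ_[2])) :=
        Algebra.subset_adjoin (by simp)
      have hb2 : b2 ∈ Algebra.adjoin ℤ_[2] ({b0, b1, b2, b3} : Set (Fin 4 → ℤ_[2])) :=
        Algebra.subset_adjoin (by simp)
      have hb3 : b3 ∈ Algebra.adjoin ℤ_[2] ({b0, b1, b2, b3} : Set (Fin 4 → ℤ_[2])) :=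
        Algebra.subset_adjoin (by simp)
      set γ : ℤ_[2] := v * (f 0 - a - f 2 + b) with hγ
      set β : ℤ_[2] := v * (a - b) with hβ
      set α : ℤ_[2] := f 2 - b + γ with hα
      set δ : ℤ_[2] := β + b with hδ
      have hf : f = α • b0 + β • b1 + γ • b2 + δ • b3 := by
        have e0 : (α • b0 + β • b1 + γ • b2 + δ • b3) 0 = f 0 := by
          simp only [Pi.add_apply, Pi.smul_apply, smul_eq_mul, b0, b1, b2, b3,
            Matrix.cons_val_zero, hα, hβ, hγ, hδ]
          linear_combination (f 0 - f 2) * hv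
        have e1 : (α • b0 + β • b1 + γ • b2 + δ • b3) 1 = f 1 := by
          simp only [Pi.add_apply, Pi.smul_apply, smul_eq_mul, b0, b1, b2, b3,
            Matrix.cons_val_one, Matrix.cons_val_zero, Matrix.head_cons, hα, hβ, hγ, hδ]
          linear_combination (f 0 - f 2 - 2*a + 2*b) * hv + ha
        have e2 : (α • b0 + β • b1 + γ • b2 + δ • b3) 2 = f 2 := by
          simp only [Pi.add_apply, Pi.smul_apply, smul_eq_mul, b0, b1, b2, b3,
            Matrix.cons_val_two, Matrix.tail_cons, Matrix.head_cons, hα, hβ, hγ, hδ]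
          ring
        have e3 : (α • b0 + β • b1 + γ • b2 + δ • b3) 3 = f 3 := by
          simp only [Pi.add_apply, Pi.smul_apply, smul_eq_mul, b0, b1, b2, b3,
            Matrix.cons_val_three, Matrix.tail_cons, Matrix.head_cons, hα, hβ, hγ, hδ]
          linear_combination hb
        funext i
        fin_cases i
        · exact e0.symm
        · exact e1.symm
        · exact e2.symm
        · exact e3.symm
      rw [hf]
      exact Subalgebra.add_mem _ (Subalgebra.add_mem _ (Subalgebra.add_mem _
        (Subalgebra.smul_mem _ hb0 _) (Subalgebra.smul_mem _ hb1 _))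
        (Subalgebra.smul_mem _ hb2 _)) (Subalgebra.smul_mem _ hb3 _)
  exact ⟨(Subalgebra.equivOfEq _ _ key).trans crownEquiv⟩
end

section
/- Let Λ = Z_3·b_0 + Z_3·(3e_1 + 6e_2) + Z_3·(9e_2) ⊆ Z_3^3, where b_0 = e_0+e_1+e_2 and e_i are the standard idempotents of Z_3^3 (the 3-adic adjacency order of the generalized quadrangle GQ(2,1)). Then the unit group Λ^× has index 12 in (Z_3^3)^× = (Z_3^×)^3. -/
noncomputable def phi3 : ℤ_[3] →+* ZMod 9 := PadicInt.toZModPow 2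

lemma phi3_2 : phi3 2 = 2 := map_ofNat _ 2
lemma phi3_3 : phi3 3 = 3 := map_ofNat _ 3
lemma phi3_9 : phi3 9 = 0 := by rw [map_ofNat]; decide

lemma dvd9_iff (a : ℤ_[3]) : (9:ℤ_[3]) ∣ a ↔ phi3 a = 0 := by
  have hk : RingHom.ker phi3 = Ideal.span {(3:ℤ_[3])^2} := by
    have := PadicInt.ker_toZModPow (p := 3) 2
    simpa [phi3] using this
  have h9 : (9:ℤ_[3]) = 3^2 := by norm_num
  rw [h9]
  constructor
  · intro h
    have : a ∈ RingHom.ker phi3 := by rw [hk, Ideal.mem_span_singleton]; exact h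
    exact this
  · intro h
    have : a ∈ RingHom.ker phi3 := h
    rw [hk, Ideal.mem_span_singleton] at this
    exact this

lemma dvd3_iff (a : ℤ_[3]) : (3:ℤ_[3]) ∣ a ↔ ∃ t : ZMod 9, phi3 a = 3 * t := by
  constructor
  · rintro ⟨b, rfl⟩
    exact ⟨phi3 b, by rw [map_mul, phi3_3]⟩
  · rintro ⟨t, ht⟩
    obtain ⟨n, rfl⟩ := ZMod.intCast_surjective t
    have h0 : phi3 (a - 3 * (n:ℤ_[3])) = 0 := by
      rw [map_sub, map_mul, map_intCast, ht, phi3_3]; ring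
    obtain ⟨r, hr⟩ := (dvd9_iff _).mpr h0
    exact ⟨(n:ℤ_[3]) + 3*r, by linear_combination hr⟩

noncomputable def Scond : Submodule ℤ_[3] (Fin 3 → ℤ_[3]) where
  carrier := {v | (3:ℤ_[3]) ∣ (v 1 - v 0) ∧ (9:ℤ_[3]) ∣ (v 0 - 2*v 1 + v 2)}
  add_mem' := by
    rintro a b ⟨⟨k, hk⟩, ⟨m, hm⟩⟩ ⟨⟨l, hl⟩, ⟨n, hn⟩⟩
    refine ⟨⟨k + l, ?_⟩, ⟨m + n, ?_⟩⟩ <;> simp only [Pi.add_apply] <;>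
      [linear_combination hk + hl; linear_combination hm + hn]
  zero_mem' := by simp
  smul_mem' := by
    rintro c v ⟨⟨k, hk⟩, ⟨m, hm⟩⟩
    refine ⟨⟨c * k, ?_⟩, ⟨c * m, ?_⟩⟩ <;> simp only [Pi.smul_apply, smul_eq_mul] <;>
      [linear_combination c * hk; linear_combination c * hm]

lemma mem_lambda_iff (v : Fin 3 → ℤ_[3]) :
    v ∈ Submodule.span ℤ_[3] ({![1, 1, 1], ![0, 3, 6], ![0, 0, 9]} : Set (Fin 3 → ℤ_[3])) ↔
    (3:ℤ_[3]) ∣ (v 1 - v 0) ∧ (9:ℤ_[3]) ∣ (v 0 - 2*v 1 + v 2) := by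
  constructor
  · intro hv
    have hle : Submodule.span ℤ_[3] ({![1, 1, 1], ![0, 3, 6], ![0, 0, 9]} : Set (Fin 3 → ℤ_[3])) ≤ Scond := by
      rw [Submodule.span_le]
      rintro x (rfl | rfl | rfl)
      · exact ⟨⟨0, by norm_num [Matrix.cons_val_one, Matrix.head_cons]⟩,
          ⟨0, by norm_num [Matrix.cons_val_one, Matrix.head_cons, Matrix.cons_val_two,
            Matrix.tail_cons]⟩⟩
      · exact ⟨⟨1, by norm_num [Matrix.cons_val_one, Matrix.head_cons]⟩,
          ⟨0, by norm_num [Matrix.cons_val_one, Matrix.head_cons, Matrix.cons_val_two,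
            Matrix.tail_cons]⟩⟩
      · exact ⟨⟨0, by norm_num [Matrix.cons_val_one, Matrix.head_cons]⟩,
          ⟨1, by norm_num [Matrix.cons_val_one, Matrix.head_cons, Matrix.cons_val_two,
            Matrix.tail_cons]⟩⟩
    exact hle hv
  · rintro ⟨⟨k, hk⟩, ⟨m, hm⟩⟩
    have hv : v = v 0 • ![1,1,1] + k • ![0,3,6] + m • ![0,0,9] := by
      funext i
      fin_cases i <;>
        simp only [Fin.mk_zero, Fin.mk_one, show (⟨2, by omega⟩ : Fin 3) = 2 from rfl,
          Fin.isValue, Pi.add_apply, Pi.smul_apply, smul_eq_mul,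
          Matrix.cons_val_zero, Matrix.cons_val_one, Matrix.head_cons, Matrix.cons_val_two,
          Matrix.tail_cons]
      · ring
      · linear_combination hk
      · linear_combination 2 * hk + hm
    rw [hv]
    refine Submodule.add_mem _ (Submodule.add_mem _ ?_ ?_) ?_ <;>
      refine Submodule.smul_mem _ _ (Submodule.subset_span ?_) <;> simp

def Pc (y : Fin 3 → (ZMod 9)ˣ) : Prop :=
  (∃ k : ZMod 9, (y 1 : ZMod 9) = (y 0 : ZMod 9) + 3 * k) ∧
  ((y 0 : ZMod 9) - 2 * (y 1 : ZMod 9) + (y 2 : ZMod 9) = 0)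

instance : DecidablePred Pc := fun y => by unfold Pc; infer_instance

lemma Pc_mul {a b : Fin 3 → (ZMod 9)ˣ} (ha : Pc a) (hb : Pc b) : Pc (a * b) := by
  obtain ⟨⟨k, hk⟩, ha2⟩ := ha
  obtain ⟨⟨l, hl⟩, hb2⟩ := hb
  have h9 : (9 : ZMod 9) = 0 := by decide
  constructor
  · refine ⟨(a 0 : ZMod 9) * l + k * (b 0 : ZMod 9) + 3 * k * l, ?_⟩
    simp only [Pi.mul_apply, Units.val_mul]
    linear_combination (b 1 : ZMod 9) * hk + ((a 0 : ZMod 9) + 3*k) * hl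
  · simp only [Pi.mul_apply, Units.val_mul]
    linear_combination (b 2 : ZMod 9) * ha2 + (2*(a 1 : ZMod 9) - (a 0 : ZMod 9)) * hb2
      - 2*((b 0 : ZMod 9) - (b 1 : ZMod 9)) * hk + 6*k*hl + 2*k*l*h9

lemma Pc_one : Pc 1 := by decide

def Wgrp : Subgroup (Fin 3 → (ZMod 9)ˣ) where
  carrier := {y | Pc y ∧ Pc y⁻¹}
  one_mem' := ⟨Pc_one, by rw [inv_one]; exact Pc_one⟩
  mul_mem' := by
    rintro a b ⟨ha1, ha2⟩ ⟨hb1, hb2⟩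
    exact ⟨Pc_mul ha1 hb1, by rw [mul_inv]; exact Pc_mul ha2 hb2⟩
  inv_mem' := by
    rintro a ⟨ha1, ha2⟩
    exact ⟨ha2, by rw [inv_inv]; exact ha1⟩

instance : DecidablePred (· ∈ Wgrp) := fun y =>
  (inferInstance : Decidable (Pc y ∧ Pc y⁻¹))

noncomputable def fhom : (Fin 3 → ℤ_[3])ˣ →* (Fin 3 → (ZMod 9)ˣ) where
  toFun x := fun i =>
    ⟨phi3 ((x : Fin 3 → ℤ_[3]) i), phi3 (((x⁻¹ : (Fin 3 → ℤ_[3])ˣ) : Fin 3 → ℤ_[3]) i),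
      by rw [← map_mul, ← Pi.mul_apply, x.mul_inv]; simp,
      by rw [← map_mul, ← Pi.mul_apply, x.inv_mul]; simp⟩
  map_one' := by
    funext i; ext; simp
  map_mul' a b := by
    funext i; ext
    simp [Units.val_mul, Pi.mul_apply, map_mul]

@[simp] lemma fhom_apply_coe (x : (Fin 3 → ℤ_[3])ˣ) (i : Fin 3) :
    ((fhom x i : (ZMod 9)ˣ) : ZMod 9) = phi3 ((x : Fin 3 → ℤ_[3]) i) := rfl

lemma fhom_surj : Function.Surjective fhom := by
  intro y
  have lift : ∀ i : Fin 3, ∃ u : ℤ_[3]ˣ, phi3 (u : ℤ_[3]) = (y i : ZMod 9) := by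
    intro i
    obtain ⟨n, hn⟩ := ZMod.intCast_surjective ((y i : ZMod 9))
    have ha : phi3 ((n:ℤ_[3])) = (y i : ZMod 9) := by rw [map_intCast]; exact hn
    have hunit : IsUnit ((n:ℤ_[3])) := by
      rw [PadicInt.isUnit_iff]
      refine le_antisymm (PadicInt.norm_le_one _) ?_
      by_contra hlt
      push_neg at hlt
      have h3 : ((3:ℕ):ℤ_[3]) ∣ (n:ℤ_[3]) := (PadicInt.norm_lt_one_iff_dvd _).mp hlt
      have h3' : (3:ℤ_[3]) ∣ (n:ℤ_[3]) := by exact_mod_cast h3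
      obtain ⟨t, ht⟩ := (dvd3_iff _).mp h3'
      rw [ha] at ht
      have h1 : (y i : ZMod 9) * ((y i)⁻¹ : (ZMod 9)ˣ) = 1 := (y i).mul_inv
      rw [ht, mul_assoc] at h1
      have : ∀ w : ZMod 9, 3 * w ≠ 1 := by decide
      exact this _ h1
    exact ⟨hunit.unit, by rw [IsUnit.unit_spec]; exact ha⟩
  choose u hu using lift
  refine ⟨⟨fun i => (u i : ℤ_[3]), fun i => ((u i)⁻¹ : ℤ_[3]ˣ), ?_, ?_⟩, ?_⟩
  · funext i; simp
  · funext i; simp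
  · funext i; ext; exact hu i

set_option maxRecDepth 8000 in
theorem stmt_18 :
    let Λ := Submodule.span ℤ_[3]
      ({![1, 1, 1], ![0, 3, 6], ![0, 0, 9]} : Set (Fin 3 → ℤ_[3]))
    ∃ U : Subgroup (Fin 3 → ℤ_[3])ˣ,
      (∀ x : (Fin 3 → ℤ_[3])ˣ,
        x ∈ U ↔ ((x : Fin 3 → ℤ_[3]) ∈ Λ ∧ ((x⁻¹ : (Fin 3 → ℤ_[3])ˣ) : Fin 3 → ℤ_[3]) ∈ Λ)) ∧
      U.index = 12 := by
  intro Λ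
  refine ⟨Wgrp.comap fhom, ?_, ?_⟩
  · intro x
    rw [Subgroup.mem_comap]
    have key : ∀ z : (Fin 3 → ℤ_[3])ˣ, Pc (fhom z) ↔ (z : Fin 3 → ℤ_[3]) ∈ Λ := by
      intro z
      rw [show (Λ : Submodule ℤ_[3] (Fin 3 → ℤ_[3])) = Submodule.span ℤ_[3]
        ({![1, 1, 1], ![0, 3, 6], ![0, 0, 9]} : Set (Fin 3 → ℤ_[3])) from rfl,
        mem_lambda_iff, dvd3_iff, dvd9_iff]
      unfold Pc
      simp only [fhom_apply_coe, map_sub, map_add, map_mul, phi3_2]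
      exact Iff.symm (and_congr
        ⟨fun ⟨t, h⟩ => ⟨t, by linear_combination h⟩, fun ⟨t, h⟩ => ⟨t, by linear_combination h⟩⟩
        Iff.rfl)
    have hmem : fhom x ∈ Wgrp ↔ Pc (fhom x) ∧ Pc (fhom x)⁻¹ := Iff.rfl
    rw [hmem, ← map_inv, key, key]
  · rw [Wgrp.index_comap_of_surjective fhom_surj]
    have hG : Nat.card (Fin 3 → (ZMod 9)ˣ) = 216 := by
      rw [Nat.card_eq_fintype_card]
      decide
    have hW : Nat.card Wgrp = 18 := by
      rw [Nat.card_eq_fintype_card]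
      decide
    have := Wgrp.index_mul_card
    rw [hG, hW] at this
    omega
end
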